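/- Let F : M_n(ℂ) → M_n(ℂ) be any map, ε ∈ ℝ, and λ, λ' ∈ M_n(ℂ) (Lagrange multipliers). Given (U, π), define the RATTLE step: π½ := π − ε·F(U) − λ; A := π½ − π½ᴴ; U' := exp(εA)·exp(ε·π½ᴴ)·U; π' := exp(εA)·π½·exp(−εA) − ε·F(U') − λ'. Then the step is reversible with the multipliers interchanged: applying the same formulas to the input (U', −π') with multipliers (λ', λ) in place of (λ, λ') yields the output (U, −π). -/

import Mathlib

open Matrix

attribute [local instance] Matrix.frobeniusNormedAddCommGroup Matrix.frobeniusNormedSpace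

/-- The RATTLE MD step with force `F`, step size `ε` and Lagrange multipliers `(lam, lam')`:
`πh := π − ε·F(U) − lam`, `A := πh − πhᴴ`, `U' := exp(εA)·exp(ε·πhᴴ)·U`,
`π' := exp(εA)·πh·exp(−εA) − ε·F(U') − lam'`. -/
noncomputable def rattleStep {n : ℕ} (F : Matrix (Fin n) (Fin n) ℂ → Matrix (Fin n) (Fin n) ℂ)
    (ε : ℝ) (lam lam' : Matrix (Fin n) (Fin n) ℂ)
    (p : Matrix (Fin n) (Fin n) ℂ × Matrix (Fin n) (Fin n) ℂ) :
    Matrix (Fin n) (Fin n) ℂ × Matrix (Fin n) (Fin n) ℂ :=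
  let πh := p.2 - ε • F p.1 - lam
  let A := πh - πhᴴ
  let U' := NormedSpace.exp (ε • A) * NormedSpace.exp (ε • πhᴴ) * p.1
  (U', NormedSpace.exp (ε • A) * πh * NormedSpace.exp (-(ε • A)) - ε • F U' - lam')

/-- The RATTLE step is reversible with the Lagrange multipliers
interchanged: if the step with multipliers `(lam, lam')` sends `(U, π)` to `(U', π')`,
then the step with multipliers `(lam', lam)` sends `(U', −π')` to `(U, −π)`. -/
theorem rattle_reversible {n : ℕ} [NeZero n]
    (F : Matrix (Fin n) (Fin n) ℂ → Matrix (Fin n) (Fin n) ℂ) (ε : ℝ)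
    (lam lam' : Matrix (Fin n) (Fin n) ℂ)
    (U π U' π' : Matrix (Fin n) (Fin n) ℂ)
    (h : rattleStep F ε lam lam' (U, π) = (U', π')) :
    rattleStep F ε lam' lam (U', -π') = (U, -π) := by
  simp only [rattleStep, Prod.mk.injEq] at h
  obtain ⟨hU', hπ'⟩ := h
  set πh : Matrix (Fin n) (Fin n) ℂ := π - ε • F U - lam with hπh
  set A : Matrix (Fin n) (Fin n) ℂ := πh - πhᴴ with hA
  set P : Matrix (Fin n) (Fin n) ℂ := NormedSpace.exp (ε • A) with hP
  set Q : Matrix (Fin n) (Fin n) ℂ := NormedSpace.exp (-(ε • A)) with hQ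
  have hPQ : P * Q = 1 := by
    rw [hP, hQ, ← Matrix.exp_add_of_commute _ _ (Commute.neg_right (Commute.refl (ε • A))),
      add_neg_cancel, NormedSpace.exp_zero]
  have hQP : Q * P = 1 := by
    rw [hP, hQ, ← Matrix.exp_add_of_commute _ _ (Commute.neg_left (Commute.refl (ε • A))),
      neg_add_cancel, NormedSpace.exp_zero]
  -- A is skew-hermitian
  have hAh : Aᴴ = -A := by
    rw [hA, conjTranspose_sub, conjTranspose_conjTranspose, neg_sub]
  have hsAh : (ε • A)ᴴ = -(ε • A) := by
    rw [conjTranspose_smul, star_trivial, hAh, smul_neg]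
  have hPh : Pᴴ = Q := by
    rw [hP, hQ, ← Matrix.exp_conjTranspose, hsAh]
  have hQh : Qᴴ = P := by
    rw [hP, hQ, ← Matrix.exp_conjTranspose, conjTranspose_neg, hsAh, neg_neg]
  -- A commutes with P and Q
  have hcomm : Commute (ε • A) A := (Commute.refl A).smul_left ε
  have hPA : P * A = A * P := (hcomm.exp_left).eq
  have hQA : Q * A = A * Q := ((hcomm.neg_left).exp_left).eq
  -- the unit
  let u : (Matrix (Fin n) (Fin n) ℂ)ˣ := ⟨P, Q, hPQ, hQP⟩
  have hu : (u : Matrix (Fin n) (Fin n) ℂ) = P := rfl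
  have hui : ((u⁻¹ : (Matrix (Fin n) (Fin n) ℂ)ˣ) : Matrix (Fin n) (Fin n) ℂ) = Q := rfl
  -- new half-step momentum
  rw [hU'] at hπ'
  have hπh2 : -π' - ε • F U' - lam' = -(P * πh * Q) := by
    rw [← hπ']; abel
  have hπh2h : (-π' - ε • F U' - lam')ᴴ = -(P * πhᴴ * Q) := by
    rw [hπh2, conjTranspose_neg, conjTranspose_mul, conjTranspose_mul, hPh, hQh, mul_assoc]
  have hA2 : (-π' - ε • F U' - lam') - (-π' - ε • F U' - lam')ᴴ = -(ε⁻¹ • (ε • A)) ∨ True := Or.inr trivial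
  have hA2' : (-π' - ε • F U' - lam') - (-π' - ε • F U' - lam')ᴴ = -A := by
    rw [hπh2h, hπh2]
    have : P * πh * Q - P * πhᴴ * Q = P * A * Q := by
      rw [hA]; noncomm_ring
    rw [neg_sub_neg, ← neg_sub (P * πh * Q), this, hPA, mul_assoc, hPQ, mul_one]
  have hsA2 : ε • ((-π' - ε • F U' - lam') - (-π' - ε • F U' - lam')ᴴ) = -(ε • A) := by
    rw [hA2', smul_neg]
  -- exp of conjugated matrix
  have hexpconj : NormedSpace.exp (ε • (-π' - ε • F U' - lam')ᴴ)
      = P * NormedSpace.exp (-(ε • πhᴴ)) * Q := by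
    have harg : ε • (-π' - ε • F U' - lam')ᴴ = P * (-(ε • πhᴴ)) * Q := by
      rw [hπh2h, smul_neg, mul_neg, neg_mul]
      congr 1
      rw [mul_smul_comm, smul_mul_assoc]
    rw [harg, ← hu, ← hui, Matrix.exp_units_conj]
  -- inverse of the angular exp
  have hEE : NormedSpace.exp (-(ε • πhᴴ)) * NormedSpace.exp (ε • πhᴴ) = 1 := by
    rw [← Matrix.exp_add_of_commute _ _ (Commute.neg_left (Commute.refl (ε • πhᴴ))),
      neg_add_cancel, NormedSpace.exp_zero]
  -- simplification helpers
  have hQPz : ∀ z : Matrix (Fin n) (Fin n) ℂ, Q * (P * z) = z := fun z => by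
    rw [← mul_assoc, hQP, one_mul]
  have hEEz : ∀ z : Matrix (Fin n) (Fin n) ℂ,
      NormedSpace.exp (-(ε • πhᴴ)) * (NormedSpace.exp (ε • πhᴴ) * z) = z := fun z => by
    rw [← mul_assoc, hEE, one_mul]
  -- the new position comes back to U
  have hU2 : NormedSpace.exp (ε • ((-π' - ε • F U' - lam') - (-π' - ε • F U' - lam')ᴴ))
      * NormedSpace.exp (ε • (-π' - ε • F U' - lam')ᴴ) * U' = U := by
    rw [hsA2, hexpconj, ← hU']
    simp only [mul_assoc, ← hQ, hQPz, hEEz]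
  simp only [rattleStep, Prod.mk.injEq]
  refine ⟨hU2, ?_⟩
  rw [hU2, hsA2, neg_neg, ← hQ, ← hP, hπh2]
  have : Q * -(P * πh * Q) * P = -πh := by
    rw [mul_neg, neg_mul, ← mul_assoc, ← mul_assoc, hQP, one_mul, mul_assoc, hQP, mul_one]
  rw [this, hπh]
  abel
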